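/- arXiv:1302.5588 — 3 statements merged into one kernel-verified Lean document; each statement's English description precedes it below -/
import Mathlib

section
/- Let X be an n-dimensional Euler complex with n odd. Then the Euler characteristic of X is zero, i.e., ∑_{k=0}^{n} (−1)^k š_k(X) = 0. -/
open Finset

/-- An abstract simplicial complex: a finite collection of finite sets closed under subsets. -/
def IsComplex {V : Type*} [DecidableEq V] (X : Finset (Finset V)) : Prop :=
  ∀ σ ∈ X, ∀ τ, τ ⊆ σ → τ ∈ X

/-- The link of a simplex `σ`: all `τ ∈ X` with `σ ∩ τ = ∅` and `σ ∪ τ ∈ X`. -/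
def lk {V : Type*} [DecidableEq V] (X : Finset (Finset V)) (σ : Finset V) :
    Finset (Finset V) :=
  X.filter (fun τ => σ ∩ τ = ∅ ∧ σ ∪ τ ∈ X)

/-- Euler characteristic: alternating sum over nonempty simplices of (-1)^(dimension). -/
def chi {V : Type*} [DecidableEq V] (Y : Finset (Finset V)) : ℤ :=
  ∑ τ ∈ Y.filter (· ≠ ∅), (-1 : ℤ) ^ (τ.card + 1)

/-- `X` is pure of dimension `n`: every maximal simplex has cardinality `n + 1`. -/
def IsPure {V : Type*} [DecidableEq V] (X : Finset (Finset V)) (n : ℕ) : Prop :=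
  ∀ σ ∈ X, (∀ τ ∈ X, σ ⊆ τ → τ = σ) → σ.card = n + 1

/-- For `n` odd, the unit sign `(-1)^(n-k-1)` equals `(-1)^k`. -/
lemma aux_units_pow {n k : ℕ} (hodd : Odd n) :
    (((-1 : ℤˣ) ^ ((n : ℤ) - k - 1) : ℤˣ) : ℤ) = (-1 : ℤ) ^ k := by
  rcases Nat.even_or_odd k with hk | hk
  · have he : Even ((n : ℤ) - k - 1) := by
      obtain ⟨m, hm⟩ := hodd
      obtain ⟨l, hl⟩ := hk
      refine ⟨(m : ℤ) - l, by push_cast [hm, hl]; ring⟩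
    have h1 : ((-1 : ℤˣ) ^ ((n : ℤ) - k - 1)) = 1 := Even.neg_one_zpow he
    rw [h1, hk.neg_one_pow, Units.val_one]
  · have he : Odd ((n : ℤ) - k - 1) := by
      obtain ⟨m, hm⟩ := hodd
      obtain ⟨l, hl⟩ := hk
      refine ⟨(m : ℤ) - l - 1, by push_cast [hm, hl]; ring⟩
    have h2 : ((-1 : ℤˣ) ^ (((n : ℤ) - k - 1) + 1)) = 1 := Even.neg_one_zpow he.add_one
    rw [zpow_add_one, mul_neg_one] at h2
    have h1 : ((-1 : ℤˣ) ^ ((n : ℤ) - k - 1)) = -1 := neg_eq_iff_eq_neg.mp h2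
    rw [h1, hk.neg_one_pow, Units.val_neg, Units.val_one]

/-- The Euler characteristic of the link of `σ` is the signed sum over cofaces of `σ`. -/
lemma aux_link_sum {V : Type*} [DecidableEq V] (X : Finset (Finset V))
    (hX : IsComplex X) (σ : Finset V) :
    chi (lk X σ) = ∑ ρ ∈ X.filter (fun ρ => σ ⊂ ρ), (-1 : ℤ) ^ (ρ.card + σ.card + 1) := by
  classical
  unfold chi
  refine Finset.sum_bij' (fun τ _ => σ ∪ τ) (fun ρ _ => ρ \ σ) ?_ ?_ ?_ ?_ ?_
  · intro τ hτ
    simp only [lk, mem_filter, ne_eq] at hτ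
    obtain ⟨⟨hτX, hdisj, hun⟩, hne⟩ := hτ
    simp only [mem_filter]
    refine ⟨hun, subset_union_left, ?_⟩
    intro hsub
    obtain ⟨x, hx⟩ := nonempty_iff_ne_empty.mpr hne
    have hxσ : x ∈ σ := hsub (mem_union_right σ hx)
    have : x ∈ σ ∩ τ := mem_inter.mpr ⟨hxσ, hx⟩
    simp [hdisj] at this
  · intro ρ hρ
    simp only [mem_filter] at hρ
    obtain ⟨hρX, hσρ⟩ := hρ
    have hsub : ρ \ σ ⊆ ρ := sdiff_subset
    simp only [lk, mem_filter, ne_eq]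
    refine ⟨⟨hX ρ hρX _ hsub, ?_, ?_⟩, ?_⟩
    · ext x; simp only [mem_inter, mem_sdiff, notMem_empty, iff_false]
      rintro ⟨h1, _, h2⟩; exact h2 h1
    · rwa [union_sdiff_of_subset hσρ.subset]
    · intro h
      have hρσ : ρ ⊆ σ := by
        intro x hx
        by_contra hxσ
        have : x ∈ ρ \ σ := mem_sdiff.mpr ⟨hx, hxσ⟩
        simp [h] at this
      exact hσρ.not_subset hρσ
  · intro τ hτ
    simp only [lk, mem_filter, ne_eq] at hτ
    obtain ⟨⟨_, hdisj, _⟩, _⟩ := hτ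
    show (σ ∪ τ) \ σ = τ
    rw [union_sdiff_cancel_left (disjoint_iff_inter_eq_empty.mpr hdisj)]
  · intro ρ hρ
    simp only [mem_filter] at hρ
    show σ ∪ (ρ \ σ) = ρ
    exact union_sdiff_of_subset hρ.2.subset
  · intro τ hτ
    simp only [lk, mem_filter, ne_eq] at hτ
    obtain ⟨⟨_, hdisj, _⟩, _⟩ := hτ
    have hcard : (σ ∪ τ).card = σ.card + τ.card :=
      card_union_of_disjoint (disjoint_iff_inter_eq_empty.mpr hdisj)
    show (-1 : ℤ) ^ (τ.card + 1) = (-1 : ℤ) ^ ((σ ∪ τ).card + σ.card + 1)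
    rw [hcard, show σ.card + τ.card + σ.card + 1 = (τ.card + 1) + 2 * σ.card by ring,
      pow_add (-1 : ℤ) (τ.card + 1) (2 * σ.card), pow_mul, neg_one_sq, one_pow, mul_one]

/-- The signed coface sum of a nonempty simplex in an odd Euler complex. -/
lemma aux_coface {V : Type*} [DecidableEq V] (X : Finset (Finset V)) (n : ℕ)
    (hX : IsComplex X) (hodd : Odd n)
    (heuler : ∀ k : ℕ, ∀ σ ∈ X, σ.card = k + 1 →
      chi (lk X σ) = 1 + (((-1 : ℤˣ) ^ ((n : ℤ) - k - 1) : ℤˣ) : ℤ))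
    (σ : Finset V) (hσ : σ ∈ X) (hne : σ ≠ ∅) :
    ∑ ρ ∈ X.filter (fun ρ => σ ⊆ ρ), (-1 : ℤ) ^ (ρ.card + σ.card) = (-1 : ℤ) ^ σ.card := by
  classical
  have hpos : 0 < σ.card := card_pos.mpr (nonempty_iff_ne_empty.mpr hne)
  have hchi : chi (lk X σ) = 1 + (-1 : ℤ) ^ (σ.card - 1) := by
    rw [heuler (σ.card - 1) σ hσ (by omega), aux_units_pow hodd]
  have hins : X.filter (fun ρ => σ ⊆ ρ) = insert σ (X.filter (fun ρ => σ ⊂ ρ)) := by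
    ext ρ
    simp only [mem_filter, mem_insert]
    constructor
    · rintro ⟨hρ, hsub⟩
      rcases eq_or_ne ρ σ with h | h
      · exact Or.inl h
      · exact Or.inr ⟨hρ, Finset.ssubset_iff_subset_ne.mpr ⟨hsub, fun h' => h h'.symm⟩⟩
    · rintro (h | ⟨hρ, hss⟩)
      · exact ⟨h ▸ hσ, h ▸ subset_rfl⟩
      · exact ⟨hρ, hss.subset⟩
  have hnσ : σ ∉ X.filter (fun ρ => σ ⊂ ρ) := by
    simp only [mem_filter, not_and]
    exact fun _ => ssubset_irrefl σ
  rw [hins, sum_insert hnσ]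
  have hstrict : ∑ ρ ∈ X.filter (fun ρ => σ ⊂ ρ), (-1 : ℤ) ^ (ρ.card + σ.card)
      = - chi (lk X σ) := by
    rw [aux_link_sum X hX σ, ← Finset.sum_neg_distrib]
    apply Finset.sum_congr rfl
    intro ρ _
    rw [pow_succ]
    ring
  rw [hstrict, hchi]
  have h1 : (-1 : ℤ) ^ (σ.card + σ.card) = 1 := by
    rw [show σ.card + σ.card = 2 * σ.card by ring, pow_mul, neg_one_sq, one_pow]
  have h2 : (-1 : ℤ) ^ σ.card = - (-1 : ℤ) ^ (σ.card - 1) := by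
    rw [show σ.card = (σ.card - 1) + 1 by omega, pow_succ]
    rw [show σ.card - 1 + 1 - 1 = σ.card - 1 by omega]
    ring
  rw [h1, h2]
  ring

/-- An odd-dimensional Euler complex has Euler characteristic zero. -/
theorem stmt6 {V : Type*} [DecidableEq V] (X : Finset (Finset V)) (n : ℕ)
    (hX : IsComplex X) (hpure : IsPure X n) (hodd : Odd n)
    (heuler : ∀ k : ℕ, ∀ σ ∈ X, σ.card = k + 1 →
      chi (lk X σ) = 1 + (((-1 : ℤˣ) ^ ((n : ℤ) - k - 1) : ℤˣ) : ℤ)) :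
    ∑ k ∈ Finset.range (n + 1), (-1 : ℤ) ^ k *
        ((X.filter (fun σ => σ.card = k + 1)).card : ℤ) = 0 := by
  classical
  set N := X.filter (fun σ => σ ≠ ∅) with hN
  -- every simplex has cardinality at most n+1
  have hbound : ∀ σ ∈ X, σ.card ≤ n + 1 := by
    intro σ hσ
    obtain ⟨τ, hτ, hmax⟩ := (X.filter (fun ρ => σ ⊆ ρ)).exists_max_image Finset.card
      ⟨σ, mem_filter.mpr ⟨hσ, subset_rfl⟩⟩
    rw [mem_filter] at hτ
    have hτcard : τ.card = n + 1 := by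
      apply hpure τ hτ.1
      intro ρ hρ hsub
      have hρf : ρ ∈ X.filter (fun ρ => σ ⊆ ρ) :=
        mem_filter.mpr ⟨hρ, hτ.2.trans hsub⟩
      exact (eq_of_subset_of_card_le hsub (hmax ρ hρf)).symm
    calc σ.card ≤ τ.card := card_le_card hτ.2
    _ = n + 1 := hτcard
  set A : ℤ := ∑ σ ∈ N, (-1 : ℤ) ^ σ.card with hA
  -- double-counting: A = -A
  have hAA : A = -A := by
    have h1 : ∀ σ ∈ N, ∑ ρ ∈ X.filter (fun ρ => σ ⊆ ρ), (-1 : ℤ) ^ (ρ.card + σ.card)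
        = (-1 : ℤ) ^ σ.card := by
      intro σ hσ
      rw [hN, mem_filter] at hσ
      exact aux_coface X n hX hodd heuler σ hσ.1 hσ.2
    have hT : A = ∑ σ ∈ N, ∑ ρ ∈ X.filter (fun ρ => σ ⊆ ρ), (-1 : ℤ) ^ (ρ.card + σ.card) :=
      (Finset.sum_congr rfl h1).symm
    have hswap : ∑ σ ∈ N, ∑ ρ ∈ X.filter (fun ρ => σ ⊆ ρ), (-1 : ℤ) ^ (ρ.card + σ.card)
        = ∑ ρ ∈ X, ∑ σ ∈ N.filter (fun σ => σ ⊆ ρ), (-1 : ℤ) ^ (ρ.card + σ.card) := by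
      simp_rw [Finset.sum_filter]
      exact Finset.sum_comm
    have hinner : ∀ ρ ∈ X, ∑ σ ∈ N.filter (fun σ => σ ⊆ ρ), (-1 : ℤ) ^ (ρ.card + σ.card)
        = (if ρ = ∅ then 0 else - (-1 : ℤ) ^ ρ.card) := by
      intro ρ hρ
      have hset : N.filter (fun σ => σ ⊆ ρ) = ρ.powerset.filter (fun σ => σ ≠ ∅) := by
        ext σ
        rw [hN, filter_filter, mem_filter, mem_filter, mem_powerset]
        constructor
        · rintro ⟨hσX, hne, hsub⟩
          exact ⟨hsub, hne⟩
        · rintro ⟨hsub, hne⟩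
          exact ⟨hX ρ hρ σ hsub, hne, hsub⟩
      rw [hset]
      have hps : ∑ σ ∈ ρ.powerset.filter (fun σ => σ ≠ ∅), (-1 : ℤ) ^ σ.card
          = (if ρ = ∅ then 1 else 0) - 1 := by
        have hall := Finset.sum_powerset_neg_one_pow_card (x := ρ)
        have hsplit : ∑ σ ∈ ρ.powerset, (-1 : ℤ) ^ σ.card
            = (-1 : ℤ) ^ (∅ : Finset V).card
              + ∑ σ ∈ ρ.powerset.filter (fun σ => σ ≠ ∅), (-1 : ℤ) ^ σ.card := by
          rw [← Finset.sum_filter_add_sum_filter_not ρ.powerset (fun σ => σ = ∅)]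
          congr 1
          rw [Finset.filter_eq']
          simp [Finset.empty_mem_powerset]
        rw [hsplit] at hall
        simp only [card_empty, pow_zero] at hall
        linarith
      calc ∑ σ ∈ ρ.powerset.filter (fun σ => σ ≠ ∅), (-1 : ℤ) ^ (ρ.card + σ.card)
          = (-1 : ℤ) ^ ρ.card * ∑ σ ∈ ρ.powerset.filter (fun σ => σ ≠ ∅), (-1 : ℤ) ^ σ.card := by
            rw [Finset.mul_sum]; exact Finset.sum_congr rfl (fun σ _ => by rw [pow_add])
        _ = (-1 : ℤ) ^ ρ.card * ((if ρ = ∅ then 1 else 0) - 1) := by rw [hps]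
        _ = (if ρ = ∅ then 0 else - (-1 : ℤ) ^ ρ.card) := by
            split <;> simp_all
    have hfin : ∑ ρ ∈ X, (if ρ = ∅ then (0 : ℤ) else - (-1 : ℤ) ^ ρ.card) = -A := by
      rw [hA, hN, Finset.sum_filter, ← Finset.sum_neg_distrib]
      refine Finset.sum_congr rfl (fun ρ _ => ?_)
      split_ifs <;> simp_all
    have hTval : ∑ σ ∈ N, ∑ ρ ∈ X.filter (fun ρ => σ ⊆ ρ), (-1 : ℤ) ^ (ρ.card + σ.card)
        = -A := by
      rw [hswap, Finset.sum_congr rfl hinner, hfin]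
    exact hT.trans hTval
  have hA0 : A = 0 := by linarith
  -- the goal sum equals -A
  have hfib : ∑ σ ∈ N, (-1 : ℤ) ^ (σ.card + 1)
      = ∑ k ∈ Finset.range (n + 1), ∑ σ ∈ N.filter (fun σ => σ.card - 1 = k),
          (-1 : ℤ) ^ (σ.card + 1) := by
    refine (Finset.sum_fiberwise_of_maps_to ?_ _).symm
    intro σ hσ
    rw [hN, mem_filter] at hσ
    have hb := hbound σ hσ.1
    have hp : 0 < σ.card := card_pos.mpr (nonempty_iff_ne_empty.mpr hσ.2)
    rw [Finset.mem_range]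
    omega
  have hfiber_eq : ∀ k ∈ Finset.range (n + 1),
      ∑ σ ∈ N.filter (fun σ => σ.card - 1 = k), (-1 : ℤ) ^ (σ.card + 1)
        = (-1 : ℤ) ^ k * ((X.filter (fun σ => σ.card = k + 1)).card : ℤ) := by
    intro k _
    have hset : N.filter (fun σ => σ.card - 1 = k) = X.filter (fun σ => σ.card = k + 1) := by
      ext σ
      rw [hN, filter_filter, mem_filter, mem_filter]
      constructor
      · rintro ⟨hσX, hne, hc⟩
        have hp : 0 < σ.card := card_pos.mpr (nonempty_iff_ne_empty.mpr hne)
        exact ⟨hσX, by omega⟩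
      · rintro ⟨hσX, hc⟩
        refine ⟨hσX, ?_, by omega⟩
        intro h
        rw [h] at hc
        simp at hc
    rw [hset]
    rw [Finset.sum_congr rfl (fun σ hσ => ?_)]
    · rw [Finset.sum_const, nsmul_eq_mul, mul_comm]
    · rw [mem_filter] at hσ
      rw [hσ.2, show k + 1 + 1 = k + 2 by ring, pow_add, neg_one_sq, mul_one]
  calc ∑ k ∈ Finset.range (n + 1), (-1 : ℤ) ^ k *
        ((X.filter (fun σ => σ.card = k + 1)).card : ℤ)
      = ∑ σ ∈ N, (-1 : ℤ) ^ (σ.card + 1) := by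
        rw [hfib]; exact (Finset.sum_congr rfl hfiber_eq).symm
    _ = - A := by
        rw [hA, ← Finset.sum_neg_distrib]
        exact Finset.sum_congr rfl (fun σ _ => by rw [pow_succ]; ring)
    _ = 0 := by rw [hA0]; ring
end

section
/- Let X be an n-dimensional Euler complex. Then for every k with 0 ≤ k ≤ n−1, (1 + (−1)^k) š_k(X) = ∑_{l=k+1}^{n} (−1)^{l−k−1} C(l+1, k+1) š_l(X). -/
open Finset

/-- (1 + (−1)^k) š_k(X) = ∑_{l=k+1}^{n} (−1)^{l−k−1} C(l+1,k+1) š_l(X) in an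
Euler complex (links of k-simplices have Euler characteristic 1 + (−1)^k). -/
theorem stmt8 {V : Type*} [DecidableEq V] (X : Finset (Finset V)) (n : ℕ)
    (hX : IsComplex X) (hpure : IsPure X n)
    (heuler : ∀ k : ℕ, ∀ σ ∈ X, σ.card = k + 1 →
      chi (lk X σ) = 1 + (-1 : ℤ) ^ k) :
    ∀ k : ℕ, k ≤ n - 1 → 1 ≤ n →
      (1 + (-1 : ℤ) ^ k) * ((X.filter (fun σ => σ.card = k + 1)).card : ℤ) =
        ∑ l ∈ Finset.Icc (k + 1) n, (-1 : ℤ) ^ (l - k - 1) *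
          (Nat.choose (l + 1) (k + 1) : ℤ) *
          ((X.filter (fun τ => τ.card = l + 1)).card : ℤ) := by
  intro k hk hn
  -- every simplex has at most n+1 vertices
  have hcard : ∀ σ ∈ X, σ.card ≤ n + 1 := by
    intro σ hσ
    obtain ⟨τ, hτT, hτmax⟩ := (X.filter (σ ⊆ ·)).exists_max_image Finset.card
      ⟨σ, by simp [hσ]⟩
    simp only [mem_filter] at hτT
    have hmax : ∀ τ' ∈ X, τ ⊆ τ' → τ' = τ := by
      intro τ' hτ' hsub
      exact (Finset.eq_of_subset_of_card_le hsub
        (hτmax τ' (mem_filter.2 ⟨hτ', hτT.2.trans hsub⟩))).symm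
    have hcτ := hpure τ hτT.1 hmax
    calc σ.card ≤ τ.card := card_le_card hτT.2
      _ = n + 1 := hcτ
  -- the Euler characteristic of a link as a sum over strict supersets
  have hlink : ∀ σ ∈ X, chi (lk X σ) =
      ∑ ρ ∈ X.filter (fun ρ => σ ⊂ ρ), (-1 : ℤ) ^ (ρ.card - σ.card + 1) := by
    intro σ hσ
    unfold chi lk
    rw [filter_filter]
    refine Finset.sum_nbij' (i := fun τ => σ ∪ τ) (j := fun ρ => ρ \ σ) ?_ ?_ ?_ ?_ ?_
    · intro τ hτ
      simp only [mem_filter] at hτ ⊢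
      obtain ⟨hτX, ⟨hint, hun⟩, hne⟩ := hτ
      refine ⟨hun, ?_⟩
      obtain ⟨v, hv⟩ := Finset.nonempty_iff_ne_empty.2 hne
      have hvσ : v ∉ σ := by
        intro h
        have : v ∈ σ ∩ τ := mem_inter.2 ⟨h, hv⟩
        rw [hint] at this
        exact notMem_empty _ this
      exact (Finset.ssubset_iff_of_subset subset_union_left).2
        ⟨v, mem_union_right _ hv, hvσ⟩
    · intro ρ hρ
      simp only [mem_filter] at hρ ⊢
      obtain ⟨hρX, hss⟩ := hρ
      refine ⟨hX ρ hρX _ sdiff_subset, ⟨?_, ?_⟩, ?_⟩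
      · simp [Finset.inter_sdiff_self]
      · rwa [Finset.union_sdiff_of_subset hss.subset]
      · obtain ⟨v, hv, hvσ⟩ := Finset.exists_of_ssubset hss
        exact Finset.nonempty_iff_ne_empty.1 ⟨v, mem_sdiff.2 ⟨hv, hvσ⟩⟩
    · intro τ hτ
      simp only [mem_filter] at hτ
      show (σ ∪ τ) \ σ = τ
      rw [Finset.union_sdiff_cancel_left (Finset.disjoint_iff_inter_eq_empty.2 hτ.2.1.1)]
    · intro ρ hρ
      simp only [mem_filter] at hρ
      exact Finset.union_sdiff_of_subset hρ.2.subset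
    · intro τ hτ
      simp only [mem_filter] at hτ
      have hdisj : Disjoint σ τ := Finset.disjoint_iff_inter_eq_empty.2 hτ.2.1.1
      rw [Finset.card_union_of_disjoint hdisj]
      congr 2
      omega
  set A := X.filter (fun σ => σ.card = k + 1) with hA
  -- step 1 : LHS as a double sum
  have step1 : (1 + (-1 : ℤ) ^ k) * (A.card : ℤ)
      = ∑ σ ∈ A, ∑ ρ ∈ X, (if σ ⊂ ρ then (-1 : ℤ) ^ (ρ.card - k) else 0) := by
    have key : ∀ σ ∈ A, (1 + (-1 : ℤ) ^ k)
        = ∑ ρ ∈ X, (if σ ⊂ ρ then (-1 : ℤ) ^ (ρ.card - k) else 0) := by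
      intro σ hσ
      simp only [hA, mem_filter] at hσ
      rw [← heuler k σ hσ.1 hσ.2, hlink σ hσ.1, ← Finset.sum_filter]
      refine Finset.sum_congr rfl fun ρ hρ => ?_
      simp only [mem_filter] at hρ
      have := Finset.card_lt_card hρ.2
      congr 1
      omega
    rw [mul_comm, ← nsmul_eq_mul, ← Finset.sum_const]
    exact Finset.sum_congr rfl key
  -- step 2 : swap and collapse the inner sum
  have step2 : (∑ σ ∈ A, ∑ ρ ∈ X, (if σ ⊂ ρ then (-1 : ℤ) ^ (ρ.card - k) else 0))
      = ∑ ρ ∈ X, (-1 : ℤ) ^ (ρ.card - k) * ((A.filter (fun σ => σ ⊂ ρ)).card : ℤ) := by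
    rw [Finset.sum_comm]
    refine Finset.sum_congr rfl fun ρ _ => ?_
    rw [← Finset.sum_filter, Finset.sum_const, nsmul_eq_mul, mul_comm]
  -- counting (k+1)-subsets of a simplex
  have hcount : ∀ ρ ∈ X, k + 2 ≤ ρ.card →
      (A.filter (fun σ => σ ⊂ ρ)).card = (ρ.card).choose (k + 1) := by
    intro ρ hρ hc
    rw [← Finset.card_powersetCard (k + 1) ρ]
    congr 1
    ext σ
    simp only [hA, filter_filter, mem_filter, mem_powersetCard]
    constructor
    · rintro ⟨hσX, hσc, hss⟩
      exact ⟨hss.subset, hσc⟩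
    · rintro ⟨hsub, hσc⟩
      exact ⟨hX ρ hρ σ hsub, hσc, Finset.ssubset_iff_subset_ne.2
        ⟨hsub, fun h => by rw [h] at hσc; omega⟩⟩
  -- vanishing for small simplices
  have hzero : ∀ ρ ∈ X, ¬ (k + 2 ≤ ρ.card) →
      (A.filter (fun σ => σ ⊂ ρ)) = ∅ := by
    intro ρ _ hc
    rw [Finset.filter_eq_empty_iff]
    intro σ hσ hss
    simp only [hA, mem_filter] at hσ
    have := Finset.card_lt_card hss
    omega
  -- step 3 : group by cardinality
  have step3 : (∑ ρ ∈ X, (-1 : ℤ) ^ (ρ.card - k) * ((A.filter (fun σ => σ ⊂ ρ)).card : ℤ))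
      = ∑ l ∈ Finset.Icc (k + 1) n, (-1 : ℤ) ^ (l - k - 1) *
          (Nat.choose (l + 1) (k + 1) : ℤ) *
          ((X.filter (fun τ => τ.card = l + 1)).card : ℤ) := by
    rw [← Finset.sum_filter_of_ne (p := fun ρ => k + 2 ≤ ρ.card)
      (fun ρ hρ hne => by
        by_contra hc
        rw [hzero ρ hρ hc] at hne
        simp at hne)]
    have hmaps : ∀ ρ ∈ X.filter (fun ρ => k + 2 ≤ ρ.card),
        ρ.card - 1 ∈ Finset.Icc (k + 1) n := by
      intro ρ hρ
      simp only [mem_filter] at hρ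
      have := hcard ρ hρ.1
      simp only [mem_Icc]
      omega
    rw [← Finset.sum_fiberwise_of_maps_to hmaps]
    refine Finset.sum_congr rfl fun l hl => ?_
    simp only [mem_Icc] at hl
    have hfib : (X.filter (fun ρ => k + 2 ≤ ρ.card)).filter (fun ρ => ρ.card - 1 = l)
        = X.filter (fun τ => τ.card = l + 1) := by
      rw [filter_filter]
      refine Finset.filter_congr fun ρ _ => ?_
      constructor
      · rintro ⟨h1, h2⟩; omega
      · intro h; omega
    rw [hfib]
    have hconst : ∀ ρ ∈ X.filter (fun τ => τ.card = l + 1),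
        (-1 : ℤ) ^ (ρ.card - k) * ((A.filter (fun σ => σ ⊂ ρ)).card : ℤ)
        = (-1 : ℤ) ^ (l - k - 1) * (Nat.choose (l + 1) (k + 1) : ℤ) := by
      intro ρ hρ
      simp only [mem_filter] at hρ
      rw [hcount ρ hρ.1 (by omega), hρ.2]
      have h1 : l + 1 - k = (l - k - 1) + 2 := by omega
      rw [h1, pow_add]
      ring
    rw [Finset.sum_congr rfl hconst, Finset.sum_const, nsmul_eq_mul, mul_comm]
  rw [step1, step2, step3]
end

section
/- Let X be an n-dimensional pure abstract simplicial complex with n odd, such that every link of a k-simplex has Euler characteristic 1 + (−1)^k. Then the number of even-dimensional simplices of X equals the number of odd-dimensional simplices of X (counting dimensions 0 through n). -/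
open Finset

/-- In an odd-dimensional Euler complex, the number of even-dimensional simplices
equals the number of odd-dimensional simplices. -/
theorem stmt9 {V : Type*} [DecidableEq V] (X : Finset (Finset V)) (n : ℕ)
    (hX : IsComplex X) (hpure : IsPure X n) (hodd : Odd n)
    (heuler : ∀ k : ℕ, ∀ σ ∈ X, σ.card = k + 1 →
      chi (lk X σ) = 1 + (-1 : ℤ) ^ k) :
    (X.filter (fun σ => σ ≠ ∅ ∧ Even (σ.card - 1))).card =
      (X.filter (fun σ => σ ≠ ∅ ∧ Odd (σ.card - 1))).card := by
  classical
  set s : Finset (Finset V) := X.filter (fun σ => σ ≠ ∅) with hsdef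
  -- Key: the sum of (-1)^|ρ| over simplices ρ strictly containing σ
  have key : ∀ σ ∈ s, ∑ ρ ∈ X.filter (fun ρ => σ ⊂ ρ), (-1 : ℤ) ^ ρ.card
      = 1 - (-1 : ℤ) ^ σ.card := by
    intro σ hσ
    rw [hsdef, mem_filter] at hσ
    obtain ⟨hσX, hσne⟩ := hσ
    obtain ⟨m, hm⟩ : ∃ m, σ.card = m + 1 :=
      ⟨σ.card - 1, (Nat.succ_pred_eq_of_pos (card_pos.2
        (nonempty_iff_ne_empty.2 hσne))).symm⟩
    have hchi := heuler m σ hσX hm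
    have hmul : (-1 : ℤ) ^ σ.card * chi (lk X σ)
        = ∑ ρ ∈ X.filter (fun ρ => σ ⊂ ρ), (-1 : ℤ) ^ (ρ.card + 1) := by
      rw [chi, Finset.mul_sum]
      refine Finset.sum_nbij' (fun τ => σ ∪ τ) (fun ρ => ρ \ σ) ?_ ?_ ?_ ?_ ?_
      · intro τ hτ
        simp only [lk, mem_filter] at hτ
        obtain ⟨⟨hτX, hint, hun⟩, hτne⟩ := hτ
        refine mem_filter.2 ⟨hun, ?_⟩
        refine Finset.ssubset_iff_of_subset (subset_union_left) |>.2 ?_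
        obtain ⟨v, hv⟩ := nonempty_iff_ne_empty.2 hτne
        exact ⟨v, mem_union_right _ hv, fun hvσ =>
          (notMem_empty v) (hint ▸ mem_inter.2 ⟨hvσ, hv⟩)⟩
      · intro ρ hρ
        rw [mem_filter] at hρ
        obtain ⟨hρX, hss⟩ := hρ
        refine mem_filter.2 ⟨mem_filter.2 ⟨hX ρ hρX _ (sdiff_subset), ?_, ?_⟩, ?_⟩
        · exact inter_sdiff_self σ ρ
        · rwa [union_sdiff_self_eq_union, union_eq_right.2 hss.subset]
        · intro h
          apply hss.not_subset
          intro v hv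
          by_contra hvσ
          exact (notMem_empty v) (h ▸ mem_sdiff.2 ⟨hv, hvσ⟩)
      · intro τ hτ
        simp only [lk, mem_filter] at hτ
        obtain ⟨⟨hτX, hint, hun⟩, hτne⟩ := hτ
        show (σ ∪ τ) \ σ = τ
        rw [union_sdiff_cancel_left (disjoint_iff_inter_eq_empty.2 hint)]
      · intro ρ hρ
        rw [mem_filter] at hρ
        show σ ∪ ρ \ σ = ρ
        exact union_sdiff_of_subset hρ.2.subset
      · intro τ hτ
        simp only [lk, mem_filter] at hτ
        obtain ⟨⟨hτX, hint, hun⟩, hτne⟩ := hτ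
        have hd : Disjoint σ τ := disjoint_iff_inter_eq_empty.2 hint
        rw [card_union_of_disjoint hd, ← pow_add]
        ring_nf
    have hsum1 : ∑ ρ ∈ X.filter (fun ρ => σ ⊂ ρ), (-1 : ℤ) ^ (ρ.card + 1)
        = (-1 : ℤ) ^ σ.card * (1 + (-1 : ℤ) ^ m) := by rw [← hmul, hchi]
    have hneg : ∀ ρ : Finset V, (-1 : ℤ) ^ (ρ.card + 1) = -((-1 : ℤ) ^ ρ.card) := by
      intro ρ; rw [pow_succ]; ring
    rw [Finset.sum_congr rfl (fun ρ _ => hneg ρ), Finset.sum_neg_distrib] at hsum1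
    have : ∑ ρ ∈ X.filter (fun ρ => σ ⊂ ρ), (-1 : ℤ) ^ ρ.card
        = -((-1 : ℤ) ^ σ.card * (1 + (-1 : ℤ) ^ m)) := by linarith
    have hsq : (-1 : ℤ) ^ m * (-1 : ℤ) ^ m = 1 := by
      rw [← pow_add]
      exact Even.neg_one_pow ⟨m, rfl⟩
    rw [this, hm, pow_succ]
    linear_combination hsq
  -- Double counting
  set T : ℤ := ∑ σ ∈ s, (-1 : ℤ) ^ σ.card with hT
  set N : ℤ := (s.card : ℤ) with hN
  have hwayA : ∑ σ ∈ s, ∑ ρ ∈ X.filter (fun ρ => σ ⊂ ρ),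
      (-1 : ℤ) ^ σ.card * (-1 : ℤ) ^ ρ.card = T - N := by
    have : ∀ σ ∈ s, ∑ ρ ∈ X.filter (fun ρ => σ ⊂ ρ),
        (-1 : ℤ) ^ σ.card * (-1 : ℤ) ^ ρ.card = (-1 : ℤ) ^ σ.card - 1 := by
      intro σ hσ
      rw [← Finset.mul_sum, key σ hσ]
      have hsq : (-1 : ℤ) ^ σ.card * (-1 : ℤ) ^ σ.card = 1 := by
        rw [← pow_add]
        exact Even.neg_one_pow ⟨σ.card, rfl⟩
      linear_combination -hsq
    rw [Finset.sum_congr rfl this, Finset.sum_sub_distrib, Finset.sum_const]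
    simp [hT, hN]
  have hwayB : ∑ σ ∈ s, ∑ ρ ∈ X.filter (fun ρ => σ ⊂ ρ),
      (-1 : ℤ) ^ σ.card * (-1 : ℤ) ^ ρ.card = -T - N := by
    have hswap : ∑ σ ∈ s, ∑ ρ ∈ X.filter (fun ρ => σ ⊂ ρ),
        (-1 : ℤ) ^ σ.card * (-1 : ℤ) ^ ρ.card
        = ∑ ρ ∈ X, ∑ σ ∈ s.filter (fun σ => σ ⊂ ρ),
        (-1 : ℤ) ^ σ.card * (-1 : ℤ) ^ ρ.card := by
      simp only [Finset.sum_filter]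
      exact Finset.sum_comm
    rw [hswap]
    have hzero : ∀ ρ ∈ X, ρ = ∅ → ∑ σ ∈ s.filter (fun σ => σ ⊂ ρ),
        (-1 : ℤ) ^ σ.card * (-1 : ℤ) ^ ρ.card = 0 := by
      intro ρ _ hρ
      subst hρ
      have : s.filter (fun σ => σ ⊂ (∅ : Finset V)) = ∅ := by
        refine Finset.filter_false_of_mem ?_
        intro σ _
        exact Finset.not_ssubset_empty σ
      rw [this, Finset.sum_empty]
    have hinner : ∀ ρ ∈ s, ∑ σ ∈ s.filter (fun σ => σ ⊂ ρ),
        (-1 : ℤ) ^ σ.card * (-1 : ℤ) ^ ρ.card = -((-1 : ℤ) ^ ρ.card) - 1 := by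
      intro ρ hρ
      rw [hsdef, mem_filter] at hρ
      obtain ⟨hρX, hρne⟩ := hρ
      have hset : s.filter (fun σ => σ ⊂ ρ)
          = ρ.powerset \ {∅, ρ} := by
        ext σ
        simp only [hsdef, mem_filter, mem_sdiff, mem_powerset, mem_insert,
          mem_singleton, not_or]
        constructor
        · rintro ⟨⟨hσX, hσne⟩, hss⟩
          exact ⟨hss.subset, hσne, hss.ne⟩
        · rintro ⟨hsub, hne, hneρ⟩
          exact ⟨⟨hX ρ hρX σ hsub, hne⟩, Finset.ssubset_iff_subset_ne.2 ⟨hsub, hneρ⟩⟩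
      have hsubset : ({∅, ρ} : Finset (Finset V)) ⊆ ρ.powerset := by
        intro x hx
        simp only [mem_insert, mem_singleton] at hx
        rcases hx with h | h <;> simp [h]
      have hsum : ∑ σ ∈ ρ.powerset \ {∅, ρ}, (-1 : ℤ) ^ σ.card
          = ∑ σ ∈ ρ.powerset, (-1 : ℤ) ^ σ.card
            - ∑ σ ∈ ({∅, ρ} : Finset (Finset V)), (-1 : ℤ) ^ σ.card :=
        Finset.sum_sdiff_eq_sub hsubset
      have hpair : ∑ σ ∈ ({∅, ρ} : Finset (Finset V)), (-1 : ℤ) ^ σ.card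
          = 1 + (-1 : ℤ) ^ ρ.card := by
        rw [Finset.sum_pair (Ne.symm hρne)]
        simp
      have hpow : ∑ σ ∈ ρ.powerset, (-1 : ℤ) ^ σ.card = 0 :=
        Finset.sum_powerset_neg_one_pow_card_of_nonempty
          (nonempty_iff_ne_empty.2 hρne)
      rw [hset, ← Finset.sum_mul, hsum, hpow, hpair]
      have hsq : (-1 : ℤ) ^ ρ.card * (-1 : ℤ) ^ ρ.card = 1 := by
        rw [← pow_add]
        exact Even.neg_one_pow ⟨ρ.card, rfl⟩
      linear_combination -hsq
    have hsplit : ∑ ρ ∈ X, ∑ σ ∈ s.filter (fun σ => σ ⊂ ρ),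
        (-1 : ℤ) ^ σ.card * (-1 : ℤ) ^ ρ.card
        = ∑ ρ ∈ s, ∑ σ ∈ s.filter (fun σ => σ ⊂ ρ),
        (-1 : ℤ) ^ σ.card * (-1 : ℤ) ^ ρ.card := by
      rw [hsdef]
      refine (Finset.sum_filter_of_ne ?_).symm
      intro ρ hρ hne
      by_contra h
      exact hne (hzero ρ hρ h)
    rw [hsplit, Finset.sum_congr rfl hinner, Finset.sum_sub_distrib,
      Finset.sum_neg_distrib, Finset.sum_const]
    simp [hT, hN]
  have hT0 : T = 0 := by
    have := hwayA.symm.trans hwayB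
    linarith
  -- From T = 0 conclude the count equality
  have hfe : X.filter (fun σ => σ ≠ ∅ ∧ Even (σ.card - 1))
      = s.filter (fun σ => Even (σ.card - 1)) := by
    rw [hsdef, Finset.filter_filter]
  have hfo : X.filter (fun σ => σ ≠ ∅ ∧ Odd (σ.card - 1))
      = s.filter (fun σ => Odd (σ.card - 1)) := by
    rw [hsdef, Finset.filter_filter]
  have hsplitT : T = ∑ σ ∈ s.filter (fun σ => Even (σ.card - 1)), (-1 : ℤ) ^ σ.card
      + ∑ σ ∈ s.filter (fun σ => ¬ Even (σ.card - 1)), (-1 : ℤ) ^ σ.card :=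
    (Finset.sum_filter_add_sum_filter_not s _ _).symm
  have hcard1 : ∀ σ ∈ s, σ.card = (σ.card - 1) + 1 := by
    intro σ hσ
    rw [hsdef, mem_filter] at hσ
    exact (Nat.succ_pred_eq_of_pos (card_pos.2 (nonempty_iff_ne_empty.2 hσ.2))).symm
  have he1 : ∑ σ ∈ s.filter (fun σ => Even (σ.card - 1)), (-1 : ℤ) ^ σ.card
      = -((s.filter (fun σ => Even (σ.card - 1))).card : ℤ) := by
    have hc : ∀ σ ∈ s.filter (fun σ => Even (σ.card - 1)),
        (-1 : ℤ) ^ σ.card = -1 := by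
      intro σ hσ
      rw [mem_filter] at hσ
      rw [hcard1 σ hσ.1, pow_succ, hσ.2.neg_one_pow]
      ring
    rw [Finset.sum_congr rfl hc, Finset.sum_const]
    simp
  have ho1 : ∑ σ ∈ s.filter (fun σ => ¬ Even (σ.card - 1)), (-1 : ℤ) ^ σ.card
      = ((s.filter (fun σ => ¬ Even (σ.card - 1))).card : ℤ) := by
    have hc : ∀ σ ∈ s.filter (fun σ => ¬ Even (σ.card - 1)),
        (-1 : ℤ) ^ σ.card = 1 := by
      intro σ hσ
      rw [mem_filter] at hσ
      rw [hcard1 σ hσ.1, pow_succ, (Nat.not_even_iff_odd.1 hσ.2).neg_one_pow]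
      ring
    rw [Finset.sum_congr rfl hc, Finset.sum_const]
    simp
  have hoe : s.filter (fun σ => ¬ Even (σ.card - 1)) = s.filter (fun σ => Odd (σ.card - 1)) := by
    apply Finset.filter_congr
    intro σ _
    exact Nat.not_even_iff_odd
  rw [hfe, hfo]
  have : ((s.filter (fun σ => Even (σ.card - 1))).card : ℤ)
      = ((s.filter (fun σ => Odd (σ.card - 1))).card : ℤ) := by
    rw [hT0, he1, ho1, hoe] at hsplitT
    linarith
  exact_mod_cast this
end
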